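/- The naturally graded p-filiform Leibniz algebra μ₃ with basis {e₁,…,e_{n-2k-1}, f₁,…,f_{2k+1}} and products [eᵢ,e₁] = e_{i+1} (1 ≤ i ≤ n-2k-2), [e₁,f_j] = f_{k+1+j} (1 ≤ j ≤ k), [eᵢ,f_{k+1}] = e_{i+1} (1 ≤ i ≤ n-2k-2), is isomorphic (as a Leibniz algebra) to the algebra with basis {e₁',…,e_{n-2k}', f₁',…,f_{2k}'} and products [eᵢ',e₁'] = e_{i+1}' (2 ≤ i ≤ n-2k-1), [e₂',f_j'] = f_{k+j}' (1 ≤ j ≤ k), via the change of basis e₁' = f_{k+1}, e₂' = e₁ - f_{k+1}, e_{i+1}' = eᵢ (2 ≤ i ≤ n-2k-1), f_j' = f_j, f_{k+j}' = f_{k+1+j} (1 ≤ j ≤ k). -/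
import Mathlib


noncomputable section

open Finset

/-! The naturally graded p-filiform Leibniz algebra `μ₃` (basis
`e₁,…,e_{n-2k-1}, f₁,…,f_{2k+1}`) and the algebra `μ₃'` (basis
`e₁',…,e_{n-2k}', f₁',…,f_{2k}'`), together with the change of basis giving an
isomorphism between them. -/

/-- Underlying space of `μ₃`. -/
abbrev L3 (n k : ℕ) := (Fin (n - 2 * k - 1) ⊕ Fin (2 * k + 1)) → ℂ

/-- Underlying space of `μ₃'`. -/
abbrev L3' (n k : ℕ) := (Fin (n - 2 * k) ⊕ Fin (2 * k)) → ℂ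

/-- basis `eᵢ` of `μ₃` (1-indexed, zero out of range). -/
def E3 (n k : ℕ) (i : ℕ) : L3 n k := fun s =>
  match s with
  | .inl a => if (a : ℕ) + 1 = i then 1 else 0
  | .inr _ => 0

/-- basis `fⱼ` of `μ₃` (1-indexed, zero out of range). -/
def F3 (n k : ℕ) (j : ℕ) : L3 n k := fun s =>
  match s with
  | .inl _ => 0
  | .inr a => if (a : ℕ) + 1 = j then 1 else 0

/-- basis `eᵢ'` of `μ₃'`. -/
def E3' (n k : ℕ) (i : ℕ) : L3' n k := fun s =>
  match s with
  | .inl a => if (a : ℕ) + 1 = i then 1 else 0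
  | .inr _ => 0

/-- basis `fⱼ'` of `μ₃'`. -/
def F3' (n k : ℕ) (j : ℕ) : L3' n k := fun s =>
  match s with
  | .inl _ => 0
  | .inr a => if (a : ℕ) + 1 = j then 1 else 0

/-- Structure constants of `μ₃`: `[eᵢ,e₁] = e_{i+1}` (1 ≤ i ≤ n-2k-2),
`[e₁,fⱼ] = f_{k+1+j}` (1 ≤ j ≤ k), `[eᵢ,f_{k+1}] = e_{i+1}` (1 ≤ i ≤ n-2k-2). -/
def c3 (n k : ℕ) :
    (Fin (n - 2 * k - 1) ⊕ Fin (2 * k + 1)) → (Fin (n - 2 * k - 1) ⊕ Fin (2 * k + 1)) → L3 n k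
  | .inl a, .inl b => if (b : ℕ) = 0 then E3 n k ((a : ℕ) + 2) else 0
  | .inl a, .inr b =>
      (if (a : ℕ) = 0 ∧ (b : ℕ) < k then F3 n k ((b : ℕ) + 1 + (k + 1)) else 0)
      + (if (b : ℕ) = k then E3 n k ((a : ℕ) + 2) else 0)
  | _, _ => 0

/-- Structure constants of `μ₃'`: `[eᵢ',e₁'] = e_{i+1}'` (2 ≤ i ≤ n-2k-1),
`[e₂',fⱼ'] = f_{k+j}'` (1 ≤ j ≤ k). -/
def c3' (n k : ℕ) :
    (Fin (n - 2 * k) ⊕ Fin (2 * k)) → (Fin (n - 2 * k) ⊕ Fin (2 * k)) → L3' n k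
  | .inl a, .inl b => if (b : ℕ) = 0 ∧ 1 ≤ (a : ℕ) then E3' n k ((a : ℕ) + 2) else 0
  | .inl a, .inr b => if (a : ℕ) = 1 ∧ (b : ℕ) < k then F3' n k ((b : ℕ) + 1 + k) else 0
  | _, _ => 0

/-- Bracket of `μ₃`. -/
def brk3 (n k : ℕ) (x y : L3 n k) : L3 n k :=
  ∑ i, ∑ j, (x i * y j) • c3 n k i j

/-- Bracket of `μ₃'`. -/
def brk3' (n k : ℕ) (x y : L3' n k) : L3' n k :=
  ∑ i, ∑ j, (x i * y j) • c3' n k i j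

/-- The change of basis on basis vectors of `μ₃'`:
`e₁' ↦ f_{k+1}`, `e₂' ↦ e₁ - f_{k+1}`, `e_{i+1}' ↦ eᵢ` (2 ≤ i ≤ n-2k-1),
`fⱼ' ↦ fⱼ`, `f_{k+j}' ↦ f_{k+1+j}` (1 ≤ j ≤ k). -/
def img (n k : ℕ) : (Fin (n - 2 * k) ⊕ Fin (2 * k)) → L3 n k
  | .inl a =>
      if (a : ℕ) = 0 then F3 n k (k + 1)
      else if (a : ℕ) = 1 then E3 n k 1 - F3 n k (k + 1)
      else E3 n k (a : ℕ)
  | .inr b => if (b : ℕ) < k then F3 n k ((b : ℕ) + 1) else F3 n k ((b : ℕ) + 2)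

/-- The linear extension of the change of basis. -/
def ψiso (n k : ℕ) (x : L3' n k) : L3 n k := ∑ i, x i • img n k i

/-! ### Auxiliary material -/

section Aux

lemma fvm {m a : ℕ} (h : a < m) : ((⟨a, h⟩ : Fin m) : ℕ) = a := rfl

variable (n k : ℕ)

/-- Inverse change of basis on basis vectors of `μ₃`. -/
def img' : (Fin (n - 2 * k - 1) ⊕ Fin (2 * k + 1)) → L3' n k
  | .inl a =>
      if (a : ℕ) = 0 then E3' n k 1 + E3' n k 2 else E3' n k ((a : ℕ) + 2)
  | .inr b =>
      if (b : ℕ) < k then F3' n k ((b : ℕ) + 1)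
      else if (b : ℕ) = k then E3' n k 1 else F3' n k (b : ℕ)

/-- Linear extension of the inverse change of basis. -/
def φiso (x : L3 n k) : L3' n k := ∑ i, x i • img' n k i

/-! #### Basis vectors as `Pi.single` -/

lemma E3_eq_single (m : ℕ) (h1 : 1 ≤ m) (h2 : m ≤ n - 2 * k - 1) :
    E3 n k m = Pi.single (Sum.inl (⟨m - 1, by omega⟩ : Fin (n - 2 * k - 1))) 1 := by
  funext s
  cases s with
  | inl c =>
      simp only [E3, Pi.single_apply, Sum.inl.injEq]
      by_cases hc : (c : ℕ) + 1 = m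
      · rw [if_pos hc, if_pos (Fin.ext (by simp only [Fin.val_mk]; omega))]
      · rw [if_neg hc, if_neg fun hh => hc (by rw [hh]; simp only [Fin.val_mk]; omega)]
  | inr c =>
      simp only [E3, Pi.single_apply]
      rw [if_neg (by simp)]

lemma F3_eq_single (m : ℕ) (h1 : 1 ≤ m) (h2 : m ≤ 2 * k + 1) :
    F3 n k m = Pi.single (Sum.inr (⟨m - 1, by omega⟩ : Fin (2 * k + 1))) 1 := by
  funext s
  cases s with
  | inr c =>
      simp only [F3, Pi.single_apply, Sum.inr.injEq]
      by_cases hc : (c : ℕ) + 1 = m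
      · rw [if_pos hc, if_pos (Fin.ext (by simp only [Fin.val_mk]; omega))]
      · rw [if_neg hc, if_neg fun hh => hc (by rw [hh]; simp only [Fin.val_mk]; omega)]
  | inl c =>
      simp only [F3, Pi.single_apply]
      rw [if_neg (by simp)]

lemma E3'_eq_single (m : ℕ) (h1 : 1 ≤ m) (h2 : m ≤ n - 2 * k) :
    E3' n k m = Pi.single (Sum.inl (⟨m - 1, by omega⟩ : Fin (n - 2 * k))) 1 := by
  funext s
  cases s with
  | inl c =>
      simp only [E3', Pi.single_apply, Sum.inl.injEq]
      by_cases hc : (c : ℕ) + 1 = m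
      · rw [if_pos hc, if_pos (Fin.ext (by simp only [Fin.val_mk]; omega))]
      · rw [if_neg hc, if_neg fun hh => hc (by rw [hh]; simp only [Fin.val_mk]; omega)]
  | inr c =>
      simp only [E3', Pi.single_apply]
      rw [if_neg (by simp)]

lemma F3'_eq_single (m : ℕ) (h1 : 1 ≤ m) (h2 : m ≤ 2 * k) :
    F3' n k m = Pi.single (Sum.inr (⟨m - 1, by omega⟩ : Fin (2 * k))) 1 := by
  funext s
  cases s with
  | inr c =>
      simp only [F3', Pi.single_apply, Sum.inr.injEq]
      by_cases hc : (c : ℕ) + 1 = m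
      · rw [if_pos hc, if_pos (Fin.ext (by simp only [Fin.val_mk]; omega))]
      · rw [if_neg hc, if_neg fun hh => hc (by rw [hh]; simp only [Fin.val_mk]; omega)]
  | inl c =>
      simp only [F3', Pi.single_apply]
      rw [if_neg (by simp)]

lemma E3_zero (m : ℕ) (h : m = 0 ∨ n - 2 * k - 1 < m) : E3 n k m = 0 := by
  funext s
  cases s with
  | inl a => have := a.isLt; simp only [E3, Pi.zero_apply]; rw [if_neg (by omega)]
  | inr a => simp [E3]

lemma E3'_zero (m : ℕ) (h : m = 0 ∨ n - 2 * k < m) : E3' n k m = 0 := by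
  funext s
  cases s with
  | inl a => have := a.isLt; simp only [E3', Pi.zero_apply]; rw [if_neg (by omega)]
  | inr a => simp [E3']

/-! #### Helpers for `Pi.single` index congruence -/

lemma single_inl_congr (x y : ℕ) (hx : x < n - 2 * k - 1) (hy : y < n - 2 * k - 1) (h : x = y) :
    (Pi.single (Sum.inl ⟨x, hx⟩) 1 : L3 n k) = Pi.single (Sum.inl ⟨y, hy⟩) 1 := by subst h; rfl

lemma single_inr_congr (x y : ℕ) (hx : x < 2 * k + 1) (hy : y < 2 * k + 1) (h : x = y) :
    (Pi.single (Sum.inr ⟨x, hx⟩) 1 : L3 n k) = Pi.single (Sum.inr ⟨y, hy⟩) 1 := by subst h; rfl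

lemma single_inl'_congr (x y : ℕ) (hx : x < n - 2 * k) (hy : y < n - 2 * k) (h : x = y) :
    (Pi.single (Sum.inl ⟨x, hx⟩) 1 : L3' n k) = Pi.single (Sum.inl ⟨y, hy⟩) 1 := by subst h; rfl

lemma single_inr'_congr (x y : ℕ) (hx : x < 2 * k) (hy : y < 2 * k) (h : x = y) :
    (Pi.single (Sum.inr ⟨x, hx⟩) 1 : L3' n k) = Pi.single (Sum.inr ⟨y, hy⟩) 1 := by subst h; rfl

/-! #### Linearity lemmas -/

lemma psi_add (x y : L3' n k) : ψiso n k (x + y) = ψiso n k x + ψiso n k y := by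
  simp [ψiso, add_smul, Finset.sum_add_distrib]

lemma psi_smul (c : ℂ) (x : L3' n k) : ψiso n k (c • x) = c • ψiso n k x := by
  simp [ψiso, Finset.smul_sum, smul_smul]

lemma psi_sub (x y : L3' n k) : ψiso n k (x - y) = ψiso n k x - ψiso n k y := by
  simp [ψiso, sub_smul, Finset.sum_sub_distrib]

lemma psi_zero : ψiso n k 0 = 0 := by simp [ψiso]

lemma psi_sum {ι : Type*} (s : Finset ι) (f : ι → L3' n k) :
    ψiso n k (∑ i ∈ s, f i) = ∑ i ∈ s, ψiso n k (f i) :=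
  map_sum (AddMonoidHom.mk' (ψiso n k) (psi_add n k)) f s

lemma psi_single (s : Fin (n - 2 * k) ⊕ Fin (2 * k)) :
    ψiso n k (Pi.single s 1) = img n k s := by
  unfold ψiso
  rw [Fintype.sum_eq_single s (fun t ht => by rw [Pi.single_eq_of_ne ht, zero_smul]),
      Pi.single_eq_same, one_smul]

lemma phi_add (x y : L3 n k) : φiso n k (x + y) = φiso n k x + φiso n k y := by
  simp [φiso, add_smul, Finset.sum_add_distrib]

lemma phi_smul (c : ℂ) (x : L3 n k) : φiso n k (c • x) = c • φiso n k x := by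
  simp [φiso, Finset.smul_sum, smul_smul]

lemma phi_sub (x y : L3 n k) : φiso n k (x - y) = φiso n k x - φiso n k y := by
  simp [φiso, sub_smul, Finset.sum_sub_distrib]

lemma phi_sum {ι : Type*} (s : Finset ι) (f : ι → L3 n k) :
    φiso n k (∑ i ∈ s, f i) = ∑ i ∈ s, φiso n k (f i) :=
  map_sum (AddMonoidHom.mk' (φiso n k) (phi_add n k)) f s

lemma phi_single (s : Fin (n - 2 * k - 1) ⊕ Fin (2 * k + 1)) :
    φiso n k (Pi.single s 1) = img' n k s := by
  unfold φiso
  rw [Fintype.sum_eq_single s (fun t ht => by rw [Pi.single_eq_of_ne ht, zero_smul]),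
      Pi.single_eq_same, one_smul]

/-! #### Bilinearity of the brackets -/

lemma brk3_add_left (x x' y : L3 n k) :
    brk3 n k (x + x') y = brk3 n k x y + brk3 n k x' y := by
  simp [brk3, add_mul, add_smul, Finset.sum_add_distrib]

lemma brk3_add_right (x y y' : L3 n k) :
    brk3 n k x (y + y') = brk3 n k x y + brk3 n k x y' := by
  simp [brk3, mul_add, add_smul, Finset.sum_add_distrib]

lemma brk3_smul_left (c : ℂ) (x y : L3 n k) :
    brk3 n k (c • x) y = c • brk3 n k x y := by
  simp [brk3, Finset.smul_sum, smul_smul, mul_assoc]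

lemma brk3_smul_right (c : ℂ) (x y : L3 n k) :
    brk3 n k x (c • y) = c • brk3 n k x y := by
  simp [brk3, Finset.smul_sum, smul_smul, mul_left_comm]

lemma brk3_sub_left (x x' y : L3 n k) :
    brk3 n k (x - x') y = brk3 n k x y - brk3 n k x' y := by
  simp [brk3, sub_mul, sub_smul, Finset.sum_sub_distrib]

lemma brk3_sub_right (x y y' : L3 n k) :
    brk3 n k x (y - y') = brk3 n k x y - brk3 n k x y' := by
  simp [brk3, mul_sub, sub_smul, Finset.sum_sub_distrib]

lemma brk3_sum_left {ι : Type*} (s : Finset ι) (f : ι → L3 n k) (y : L3 n k) :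
    brk3 n k (∑ i ∈ s, f i) y = ∑ i ∈ s, brk3 n k (f i) y :=
  map_sum (AddMonoidHom.mk' (fun x => brk3 n k x y) (fun a b => brk3_add_left n k a b y)) f s

lemma brk3_sum_right {ι : Type*} (s : Finset ι) (x : L3 n k) (f : ι → L3 n k) :
    brk3 n k x (∑ i ∈ s, f i) = ∑ i ∈ s, brk3 n k x (f i) :=
  map_sum (AddMonoidHom.mk' (fun y => brk3 n k x y) (fun a b => brk3_add_right n k x a b)) f s

lemma brk3_single (s t : Fin (n - 2 * k - 1) ⊕ Fin (2 * k + 1)) :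
    brk3 n k (Pi.single s 1) (Pi.single t 1) = c3 n k s t := by
  unfold brk3
  rw [Fintype.sum_eq_single s (fun u hu => Finset.sum_eq_zero fun v _ => by
        rw [Pi.single_eq_of_ne hu, zero_mul, zero_smul]),
      Fintype.sum_eq_single t (fun v hv => by rw [Pi.single_eq_of_ne hv, mul_zero, zero_smul]),
      Pi.single_eq_same, Pi.single_eq_same, one_mul, one_smul]

lemma brk3_single_left (s : Fin (n - 2 * k - 1) ⊕ Fin (2 * k + 1)) (y : L3 n k) :
    brk3 n k (Pi.single s 1) y = ∑ t, y t • c3 n k s t := by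
  unfold brk3
  rw [Fintype.sum_eq_single s (fun u hu => Finset.sum_eq_zero fun v _ => by
        rw [Pi.single_eq_of_ne hu, zero_mul, zero_smul])]
  exact Finset.sum_congr rfl fun v _ => by rw [Pi.single_eq_same, one_mul]

lemma brk3_single_right (x : L3 n k) (t : Fin (n - 2 * k - 1) ⊕ Fin (2 * k + 1)) :
    brk3 n k x (Pi.single t 1) = ∑ s, x s • c3 n k s t := by
  unfold brk3
  exact Finset.sum_congr rfl fun s _ => by
    rw [Fintype.sum_eq_single t (fun v hv => by rw [Pi.single_eq_of_ne hv, mul_zero, zero_smul]),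
        Pi.single_eq_same, mul_one]

lemma brk3_comb {ι ι' : Type*} [Fintype ι] [Fintype ι'] (c : ι → ℂ) (d : ι' → ℂ)
    (u : ι → L3 n k) (v : ι' → L3 n k) :
    brk3 n k (∑ i, c i • u i) (∑ j, d j • v j)
      = ∑ i, ∑ j, (c i * d j) • brk3 n k (u i) (v j) := by
  rw [brk3_sum_left]
  refine Finset.sum_congr rfl fun i _ => ?_
  rw [brk3_smul_left, brk3_sum_right, Finset.smul_sum]
  refine Finset.sum_congr rfl fun j _ => ?_
  rw [brk3_smul_right, smul_smul]

/-! #### Evaluation of `img` and `img'` as `Pi.single`s -/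

lemma img_inl0 (a : Fin (n - 2 * k)) (h : (a : ℕ) = 0) :
    img n k (.inl a) = Pi.single (Sum.inr (⟨k, by omega⟩ : Fin (2 * k + 1))) 1 := by
  have h1 : img n k (.inl a) = F3 n k (k + 1) := by simp [img, h]
  rw [h1]
  exact F3_eq_single n k (k + 1) (by omega) (by omega)

lemma img_inl1 (hn : 2 * k + 5 ≤ n) (a : Fin (n - 2 * k)) (h : (a : ℕ) = 1) :
    img n k (.inl a) = Pi.single (Sum.inl (⟨0, by omega⟩ : Fin (n - 2 * k - 1))) 1
      - Pi.single (Sum.inr (⟨k, by omega⟩ : Fin (2 * k + 1))) 1 := by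
  have h1 : img n k (.inl a) = E3 n k 1 - F3 n k (k + 1) := by simp [img, h]
  rw [h1, show E3 n k 1 = Pi.single (Sum.inl (⟨0, by omega⟩ : Fin (n - 2 * k - 1))) (1 : ℂ) from
        E3_eq_single n k 1 le_rfl (by omega),
      show F3 n k (k + 1) = Pi.single (Sum.inr (⟨k, by omega⟩ : Fin (2 * k + 1))) (1 : ℂ) from
        F3_eq_single n k (k + 1) (by omega) (by omega)]

lemma img_inl2 (a : Fin (n - 2 * k)) (h : 2 ≤ (a : ℕ)) :
    img n k (.inl a)
      = Pi.single (Sum.inl (⟨(a : ℕ) - 1, by have := a.isLt; omega⟩ : Fin (n - 2 * k - 1))) 1 := by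
  have h1 : img n k (.inl a) = E3 n k (a : ℕ) := by
    have e0 : ¬((a : ℕ) = 0) := by omega
    have e1 : ¬((a : ℕ) = 1) := by omega
    simp [img, e0, e1]
  rw [h1]
  exact E3_eq_single n k (a : ℕ) (by omega) (by have := a.isLt; omega)

lemma img_inr_lt (b : Fin (2 * k)) (h : (b : ℕ) < k) :
    img n k (.inr b) = Pi.single (Sum.inr (⟨(b : ℕ), by omega⟩ : Fin (2 * k + 1))) 1 := by
  have h1 : img n k (.inr b) = F3 n k ((b : ℕ) + 1) := by simp [img, h]
  rw [h1]
  exact F3_eq_single n k ((b : ℕ) + 1) (by omega) (by have := b.isLt; omega)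

lemma img_inr_ge (b : Fin (2 * k)) (h : k ≤ (b : ℕ)) :
    img n k (.inr b)
      = Pi.single (Sum.inr (⟨(b : ℕ) + 1, by have := b.isLt; omega⟩ : Fin (2 * k + 1))) 1 := by
  have h1 : img n k (.inr b) = F3 n k ((b : ℕ) + 2) := by simp [img, Nat.not_lt.mpr h]
  rw [h1]
  exact F3_eq_single n k ((b : ℕ) + 2) (by omega) (by have := b.isLt; omega)

lemma img'_inl0 (hn : 2 * k + 5 ≤ n) (a : Fin (n - 2 * k - 1)) (h : (a : ℕ) = 0) :
    img' n k (.inl a) = Pi.single (Sum.inl (⟨0, by omega⟩ : Fin (n - 2 * k))) 1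
      + Pi.single (Sum.inl (⟨1, by omega⟩ : Fin (n - 2 * k))) 1 := by
  have h1 : img' n k (.inl a) = E3' n k 1 + E3' n k 2 := by simp [img', h]
  rw [h1, show E3' n k 1 = Pi.single (Sum.inl (⟨0, by omega⟩ : Fin (n - 2 * k))) (1 : ℂ) from
        E3'_eq_single n k 1 le_rfl (by omega),
      show E3' n k 2 = Pi.single (Sum.inl (⟨1, by omega⟩ : Fin (n - 2 * k))) (1 : ℂ) from
        E3'_eq_single n k 2 (by omega) (by omega)]

lemma img'_inl1 (a : Fin (n - 2 * k - 1)) (h : 1 ≤ (a : ℕ)) :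
    img' n k (.inl a)
      = Pi.single (Sum.inl (⟨(a : ℕ) + 1, by have := a.isLt; omega⟩ : Fin (n - 2 * k))) 1 := by
  have h1 : img' n k (.inl a) = E3' n k ((a : ℕ) + 2) := by
    have e0 : ¬((a : ℕ) = 0) := by omega
    simp [img', e0]
  rw [h1]
  exact E3'_eq_single n k ((a : ℕ) + 2) (by omega) (by have := a.isLt; omega)

lemma img'_inr_lt (b : Fin (2 * k + 1)) (h : (b : ℕ) < k) :
    img' n k (.inr b) = Pi.single (Sum.inr (⟨(b : ℕ), by omega⟩ : Fin (2 * k))) 1 := by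
  have h1 : img' n k (.inr b) = F3' n k ((b : ℕ) + 1) := by simp [img', h]
  rw [h1]
  exact F3'_eq_single n k ((b : ℕ) + 1) (by omega) (by omega)

lemma img'_inr_eq (hn : 2 * k + 5 ≤ n) (b : Fin (2 * k + 1)) (h : (b : ℕ) = k) :
    img' n k (.inr b) = Pi.single (Sum.inl (⟨0, by omega⟩ : Fin (n - 2 * k))) 1 := by
  have h1 : img' n k (.inr b) = E3' n k 1 := by simp [img', h]
  rw [h1]
  exact E3'_eq_single n k 1 le_rfl (by omega)

lemma img'_inr_gt (b : Fin (2 * k + 1)) (h : k < (b : ℕ)) :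
    img' n k (.inr b)
      = Pi.single (Sum.inr (⟨(b : ℕ) - 1, by have := b.isLt; omega⟩ : Fin (2 * k))) 1 := by
  have h1 : img' n k (.inr b) = F3' n k (b : ℕ) := by
    have e0 : ¬((b : ℕ) < k) := by omega
    have e1 : ¬((b : ℕ) = k) := by omega
    simp [img', e0, e1]
  rw [h1]
  exact F3'_eq_single n k (b : ℕ) (by omega) (by have := b.isLt; omega)

/-! #### `ψiso` on basis vectors of `μ₃'` -/

lemma psi_E3' (hn : 2 * k + 5 ≤ n) (m : ℕ) (h1 : 3 ≤ m) (h2 : m ≤ n - 2 * k) :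
    ψiso n k (E3' n k m) = E3 n k (m - 1) := by
  rw [E3'_eq_single n k m (by omega) h2, psi_single,
      img_inl2 n k _ (by simp only [Fin.val_mk]; omega),
      E3_eq_single n k (m - 1) (by omega) (by omega)]

lemma psi_E3'_zero (m : ℕ) (h : n - 2 * k < m) : ψiso n k (E3' n k m) = 0 := by
  rw [E3'_zero n k m (Or.inr h), psi_zero]

lemma psi_F3' (m : ℕ) (h1 : k + 1 ≤ m) (h2 : m ≤ 2 * k) :
    ψiso n k (F3' n k m) = F3 n k (m + 1) := by
  rw [F3'_eq_single n k m (by omega) h2, psi_single,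
      img_inr_ge n k _ (by simp only [Fin.val_mk]; omega),
      F3_eq_single n k (m + 1) (by omega) (by omega)]
  exact single_inr_congr n k _ _ _ _ (by simp only [Fin.val_mk]; omega)

/-! #### Evaluation of structure constants -/

lemma c3_inr_left (b : Fin (2 * k + 1)) (t : Fin (n - 2 * k - 1) ⊕ Fin (2 * k + 1)) :
    c3 n k (.inr b) t = 0 := by cases t <;> rfl

lemma c3_inl_inl0 (s t : Fin (n - 2 * k - 1)) (ht : (t : ℕ) = 0) :
    c3 n k (.inl s) (.inl t) = E3 n k ((s : ℕ) + 2) := by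
  simp only [c3]; rw [if_pos ht]

lemma c3_inl_ne0 (s t : Fin (n - 2 * k - 1)) (ht : (t : ℕ) ≠ 0) :
    c3 n k (.inl s) (.inl t) = 0 := by
  simp only [c3]; rw [if_neg ht]

lemma c3_inl_inr_k (s : Fin (n - 2 * k - 1)) (t : Fin (2 * k + 1)) (ht : (t : ℕ) = k) :
    c3 n k (.inl s) (.inr t) = E3 n k ((s : ℕ) + 2) := by
  simp only [c3]; rw [if_neg (by omega), if_pos ht, zero_add]

lemma c3_inl0_inr_lt (s : Fin (n - 2 * k - 1)) (t : Fin (2 * k + 1))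
    (hs : (s : ℕ) = 0) (ht : (t : ℕ) < k) :
    c3 n k (.inl s) (.inr t) = F3 n k ((t : ℕ) + 1 + (k + 1)) := by
  simp only [c3]; rw [if_pos ⟨hs, ht⟩, if_neg (by omega), add_zero]

lemma c3_inl_inr_zero (s : Fin (n - 2 * k - 1)) (t : Fin (2 * k + 1))
    (h1 : ¬((s : ℕ) = 0 ∧ (t : ℕ) < k)) (h2 : (t : ℕ) ≠ k) :
    c3 n k (.inl s) (.inr t) = 0 := by
  simp only [c3]; rw [if_neg h1, if_neg h2, add_zero]

/-! #### The key computation -/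

lemma key (hk : 1 ≤ k) (hn : 2 * k + 5 ≤ n) (i j : Fin (n - 2 * k) ⊕ Fin (2 * k)) :
    ψiso n k (c3' n k i j) = brk3 n k (img n k i) (img n k j) := by
  obtain a | b := i
  · obtain a' | b' := j
    · -- i = inl a, j = inl a'
      have ha := a.isLt; have ha' := a'.isLt
      by_cases h0 : (a' : ℕ) = 0
      · rw [img_inl0 n k a' h0]
        by_cases g0 : (a : ℕ) = 0
        · have h1 : c3' n k (.inl a) (.inl a') = 0 := by
            simp only [c3']; rw [if_neg (by omega)]
          rw [h1, psi_zero, img_inl0 n k a g0, brk3_single, c3_inr_left]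
        · have h1 : c3' n k (.inl a) (.inl a') = E3' n k ((a : ℕ) + 2) := by
            simp only [c3']; rw [if_pos ⟨h0, by omega⟩]
          rw [h1]
          by_cases g1 : (a : ℕ) = 1
          · rw [img_inl1 n k hn a g1, brk3_sub_left, brk3_single, brk3_single,
                c3_inr_left, c3_inl_inr_k n k _ _ (by simp only [Fin.val_mk]),
                psi_E3' n k hn _ (by omega) (by omega), sub_zero]
            exact congrArg (E3 n k) (by simp only [Fin.val_mk]; omega)
          · rw [img_inl2 n k a (by omega), brk3_single,
                c3_inl_inr_k n k _ _ (by simp only [Fin.val_mk])]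
            by_cases g2 : (a : ℕ) + 2 ≤ n - 2 * k
            · rw [psi_E3' n k hn _ (by omega) g2]
              exact congrArg (E3 n k) (by simp only [Fin.val_mk]; omega)
            · rw [psi_E3'_zero n k _ (by omega),
                  E3_zero n k _ (Or.inr (by simp only [Fin.val_mk]; omega))]
      · have h1 : c3' n k (.inl a) (.inl a') = 0 := by
          simp only [c3']; rw [if_neg (by omega)]
        rw [h1, psi_zero]
        by_cases g1 : (a' : ℕ) = 1
        · rw [img_inl1 n k hn a' g1, brk3_sub_right, brk3_single_right, brk3_single_right]
          symm
          rw [sub_eq_zero]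
          refine Finset.sum_congr rfl fun s _ => ?_
          congr 1
          obtain u | u := s
          · rw [c3_inl_inl0 n k u _ (by simp only [Fin.val_mk]),
                c3_inl_inr_k n k u _ (by simp only [Fin.val_mk])]
          · rw [c3_inr_left, c3_inr_left]
        · rw [img_inl2 n k a' (by omega), brk3_single_right]
          symm
          refine Finset.sum_eq_zero fun s _ => ?_
          obtain u | u := s
          · rw [c3_inl_ne0 n k u _ (by simp only [Fin.val_mk]; omega), smul_zero]
          · rw [c3_inr_left, smul_zero]
    · -- i = inl a, j = inr b'
      have ha := a.isLt; have hb' := b'.isLt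
      by_cases g0 : (a : ℕ) = 0
      · have h1 : c3' n k (.inl a) (.inr b') = 0 := by
          simp only [c3']; rw [if_neg (by omega)]
        rw [h1, psi_zero, img_inl0 n k a g0]
        rcases Nat.lt_or_ge (b' : ℕ) k with h | h
        · rw [img_inr_lt n k b' h, brk3_single, c3_inr_left]
        · rw [img_inr_ge n k b' h, brk3_single, c3_inr_left]
      · by_cases g1 : (a : ℕ) = 1
        · rw [img_inl1 n k hn a g1, brk3_sub_left]
          rcases Nat.lt_or_ge (b' : ℕ) k with h | h
          · have h1 : c3' n k (.inl a) (.inr b') = F3' n k ((b' : ℕ) + 1 + k) := by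
              simp only [c3']; rw [if_pos ⟨g1, h⟩]
            rw [h1, psi_F3' n k _ (by omega) (by omega),
                img_inr_lt n k b' h, brk3_single, brk3_single, c3_inr_left,
                c3_inl0_inr_lt n k _ _ (by simp only [Fin.val_mk])
                  (by simp only [Fin.val_mk]; exact h), sub_zero]
            exact congrArg (F3 n k) (by simp only [Fin.val_mk]; omega)
          · have h1 : c3' n k (.inl a) (.inr b') = 0 := by
              simp only [c3']; rw [if_neg (by omega)]
            rw [h1, psi_zero, img_inr_ge n k b' h, brk3_single, brk3_single, c3_inr_left,
                c3_inl_inr_zero n k _ _ (by simp only [Fin.val_mk]; omega)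
                  (by simp only [Fin.val_mk]; omega), sub_zero]
        · have h1 : c3' n k (.inl a) (.inr b') = 0 := by
            simp only [c3']; rw [if_neg (by omega)]
          rw [h1, psi_zero, img_inl2 n k a (by omega)]
          rcases Nat.lt_or_ge (b' : ℕ) k with h | h
          · rw [img_inr_lt n k b' h, brk3_single,
                c3_inl_inr_zero n k _ _ (by simp only [Fin.val_mk]; omega)
                  (by simp only [Fin.val_mk]; omega)]
          · rw [img_inr_ge n k b' h, brk3_single,
                c3_inl_inr_zero n k _ _ (by simp only [Fin.val_mk]; omega)
                  (by simp only [Fin.val_mk]; omega)]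
  · -- i = inr b
    have h1 : c3' n k (.inr b) j = 0 := by cases j <;> rfl
    rw [h1, psi_zero]
    have h2 : ∀ (t : Fin (2 * k + 1)) (y : L3 n k),
        brk3 n k (Pi.single (Sum.inr t) 1) y = 0 := fun t y => by
      rw [brk3_single_left]
      exact Finset.sum_eq_zero fun u _ => by rw [c3_inr_left, smul_zero]
    rcases Nat.lt_or_ge (b : ℕ) k with h | h
    · rw [img_inr_lt n k b h, h2]
    · rw [img_inr_ge n k b h, h2]

/-! #### Inverses -/

lemma sum_single {ι : Type*} [Fintype ι] [DecidableEq ι] (y : ι → ℂ) :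
    ∑ i, y i • (Pi.single i 1 : ι → ℂ) = y := by
  funext s
  rw [Finset.sum_apply,
      Fintype.sum_eq_single s (fun t ht => by
        rw [Pi.smul_apply, Pi.single_eq_of_ne (Ne.symm ht), smul_zero]),
      Pi.smul_apply, Pi.single_eq_same, smul_eq_mul, mul_one]

lemma psi_img' (hk : 1 ≤ k) (hn : 2 * k + 5 ≤ n)
    (s : Fin (n - 2 * k - 1) ⊕ Fin (2 * k + 1)) :
    ψiso n k (img' n k s) = Pi.single s 1 := by
  have hadd : ∀ x y : L3 n k, x + (y - x) = y := fun x y => by abel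
  obtain a | b := s
  · have ha := a.isLt
    by_cases h0 : (a : ℕ) = 0
    · rw [img'_inl0 n k hn a h0, psi_add, psi_single, psi_single,
          img_inl0 n k _ (by simp only [Fin.val_mk]),
          img_inl1 n k hn _ (by simp only [Fin.val_mk]), hadd]
      exact congrArg (fun z => (Pi.single (Sum.inl z) 1 : L3 n k))
        (Fin.ext (by simp only [Fin.val_mk]; omega))
    · rw [img'_inl1 n k a (by omega), psi_single,
          img_inl2 n k _ (by simp only [Fin.val_mk]; omega)]
      exact congrArg (fun z => (Pi.single (Sum.inl z) 1 : L3 n k))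
        (Fin.ext (by simp only [Fin.val_mk]; omega))
  · have hb := b.isLt
    rcases lt_trichotomy (b : ℕ) k with h | h | h
    · rw [img'_inr_lt n k b h, psi_single,
          img_inr_lt n k _ (by simp only [Fin.val_mk]; exact h)]
    · rw [img'_inr_eq n k hn b h, psi_single,
          img_inl0 n k _ (by simp only [Fin.val_mk])]
      exact congrArg (fun z => (Pi.single (Sum.inr z) 1 : L3 n k))
        (Fin.ext (by simp only [Fin.val_mk]; omega))
    · rw [img'_inr_gt n k b h, psi_single,
          img_inr_ge n k _ (by simp only [Fin.val_mk]; omega)]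
      exact congrArg (fun z => (Pi.single (Sum.inr z) 1 : L3 n k))
        (Fin.ext (by simp only [Fin.val_mk]; omega))

lemma phi_img (hk : 1 ≤ k) (hn : 2 * k + 5 ≤ n)
    (i : Fin (n - 2 * k) ⊕ Fin (2 * k)) :
    φiso n k (img n k i) = Pi.single i 1 := by
  have hsub : ∀ x y : L3' n k, x + y - x = y := fun x y => by abel
  obtain a | b := i
  · have ha := a.isLt
    by_cases h0 : (a : ℕ) = 0
    · rw [img_inl0 n k a h0, phi_single, img'_inr_eq n k hn _ (by simp only [Fin.val_mk])]
      exact congrArg (fun z => (Pi.single (Sum.inl z) 1 : L3' n k))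
        (Fin.ext (by simp only [Fin.val_mk]; omega))
    · by_cases h1 : (a : ℕ) = 1
      · rw [img_inl1 n k hn a h1, phi_sub, phi_single, phi_single,
            img'_inl0 n k hn _ (by simp only [Fin.val_mk]),
            img'_inr_eq n k hn _ (by simp only [Fin.val_mk]), hsub]
        exact congrArg (fun z => (Pi.single (Sum.inl z) 1 : L3' n k))
          (Fin.ext (by simp only [Fin.val_mk]; omega))
      · rw [img_inl2 n k a (by omega), phi_single,
            img'_inl1 n k _ (by simp only [Fin.val_mk]; omega)]
        exact congrArg (fun z => (Pi.single (Sum.inl z) 1 : L3' n k))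
          (Fin.ext (by simp only [Fin.val_mk]; omega))
  · have hb := b.isLt
    rcases Nat.lt_or_ge (b : ℕ) k with h | h
    · rw [img_inr_lt n k b h, phi_single,
          img'_inr_lt n k _ (by simp only [Fin.val_mk]; exact h)]
    · rw [img_inr_ge n k b h, phi_single,
          img'_inr_gt n k _ (by simp only [Fin.val_mk]; omega)]
      exact congrArg (fun z => (Pi.single (Sum.inr z) 1 : L3' n k))
        (Fin.ext (by simp only [Fin.val_mk]; omega))

end Aux

/-- `μ₃` is isomorphic to `μ₃'` via the indicated change of basis: the linear
map extending it is bijective and transports the bracket of `μ₃'` to the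
bracket of `μ₃`. -/
theorem mu3_iso_mu3prime (n k : ℕ) (hk : 1 ≤ k) (hn : 2 * k + 5 ≤ n) :
    Function.Bijective (ψiso n k) ∧
    ∀ x y : L3' n k, ψiso n k (brk3' n k x y) = brk3 n k (ψiso n k x) (ψiso n k y) := by
  constructor
  · exact Function.bijective_iff_has_inverse.mpr
      ⟨φiso n k,
        fun x => by
          show φiso n k (ψiso n k x) = x
          rw [show ψiso n k x = ∑ i, x i • img n k i from rfl, phi_sum]
          simp only [phi_smul, phi_img n k hk hn]
          exact sum_single x,
        fun y => by
          show ψiso n k (φiso n k y) = y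
          rw [show φiso n k y = ∑ i, y i • img' n k i from rfl, psi_sum]
          simp only [psi_smul, psi_img' n k hk hn]
          exact sum_single y⟩
  · intro x y
    have L : ψiso n k (brk3' n k x y) = ∑ i, ∑ j, (x i * y j) • ψiso n k (c3' n k i j) := by
      rw [show brk3' n k x y = ∑ i, ∑ j, (x i * y j) • c3' n k i j from rfl, psi_sum]
      exact Finset.sum_congr rfl fun i _ => by
        rw [psi_sum]
        exact Finset.sum_congr rfl fun j _ => psi_smul n k _ _
    have R : brk3 n k (ψiso n k x) (ψiso n k y)
        = ∑ i, ∑ j, (x i * y j) • brk3 n k (img n k i) (img n k j) := by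
      rw [show ψiso n k x = ∑ i, x i • img n k i from rfl,
          show ψiso n k y = ∑ j, y j • img n k j from rfl]
      exact brk3_comb n k x y (img n k) (img n k)
    rw [L, R]
    exact Finset.sum_congr rfl fun i _ => Finset.sum_congr rfl fun j _ =>
      congrArg (fun z => (x i * y j) • z) (key n k hk hn i j)

end
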